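/- arXiv:1602.08838 — 3 statements merged into one kernel-verified Lean document; each statement's English description precedes it below -/
import Mathlib

section
/- For any vector λ = (λ_1, ..., λ_n) ∈ ℝ^n with n ≥ 2 lying in the cone Γ_2 (i.e. σ_1(λ) > 0 and σ_2(λ) > 0), for every index l ∈ {1, ..., n} the sum ∑_{i ≠ l} λ_i is strictly positive. -/
open Finset

/-- First elementary symmetric polynomial. -/
def sigma1 {n : ℕ} (lam : Fin n → ℝ) : ℝ := ∑ i, lam i

/-- Second elementary symmetric polynomial: ∑_{i<j} λ_i λ_j. -/
def sigma2 {n : ℕ} (lam : Fin n → ℝ) : ℝ :=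
  ∑ i, ∑ j, if i < j then lam i * lam j else 0

lemma sigma2_key {n : ℕ} (lam : Fin n → ℝ) :
    2 * sigma2 lam + ∑ i, (lam i)^2 = (sigma1 lam)^2 := by
  have hswap : (∑ i, ∑ j, if i < j then lam i * lam j else 0)
      = ∑ i, ∑ j, if j < i then lam i * lam j else 0 := by
    rw [Finset.sum_comm]
    apply Finset.sum_congr rfl; intro i _
    apply Finset.sum_congr rfl; intro j _
    simp [mul_comm]
  have hdiag : (∑ i, lam i * lam i) = ∑ i, ∑ j, if i = j then lam i * lam j else 0 := by
    apply Finset.sum_congr rfl; intro i _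
    rw [Finset.sum_ite_eq (Finset.univ) i (fun j => lam i * lam j)]
    simp
  simp only [sigma1, sigma2, sq]
  rw [Finset.sum_mul_sum, two_mul]
  nth_rewrite 2 [hswap]
  rw [hdiag, ← Finset.sum_add_distrib, ← Finset.sum_add_distrib]
  apply Finset.sum_congr rfl; intro i _
  rw [← Finset.sum_add_distrib, ← Finset.sum_add_distrib]
  apply Finset.sum_congr rfl; intro j _
  rcases lt_trichotomy i j with h | h | h
  · simp [h, h.ne, not_lt.mpr h.le]
  · simp [h, lt_irrefl]
  · simp [h, h.ne', not_lt.mpr h.le]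

theorem stmt0 (n : ℕ) (hn : 2 ≤ n) (lam : Fin n → ℝ)
    (h1 : 0 < sigma1 lam) (h2 : 0 < sigma2 lam) (l : Fin n) :
    0 < ∑ i ∈ Finset.univ.erase l, lam i := by
  by_contra hc
  push_neg at hc
  have hsum : sigma1 lam = lam l + ∑ i ∈ Finset.univ.erase l, lam i := by
    rw [sigma1, ← Finset.add_sum_erase _ _ (Finset.mem_univ l)]
  have hl : sigma1 lam ≤ lam l := by linarith
  have hsq : (sigma1 lam)^2 ≤ (lam l)^2 := by
    have := h1.le
    nlinarith
  have hge : (lam l)^2 ≤ ∑ i, (lam i)^2 :=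
    Finset.single_le_sum (f := fun i => (lam i)^2) (fun i _ => sq_nonneg _) (Finset.mem_univ l)
  have := sigma2_key lam
  linarith
end

section
/- For any λ ∈ Γ_2 ⊂ ℝ^n with eigenvalues ordered λ_1 ≥ λ_2 ≥ ... ≥ λ_n, one has λ_1 · σ_2^{1,1}(λ) ≥ (2/n) σ_2(λ), where σ_2^{1,1}(λ) = ∑_{i ≠ 1} λ_i is the partial derivative of σ_2 with respect to λ_1. -/
open Finset

lemma pair_sum_sq {n : ℕ} (s : Finset (Fin n)) (f : Fin n → ℝ) :
    (∑ i ∈ s, f i) ^ 2 =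
      2 * (∑ i ∈ s, ∑ j ∈ s, if i < j then f i * f j else 0) + ∑ i ∈ s, f i ^ 2 := by
  have key : ∀ i ∈ s, ∀ j ∈ s, f i * f j =
      (if i < j then f i * f j else 0) + (if j < i then f i * f j else 0) +
      (if i = j then f i * f j else 0) := by
    intro i _ j _
    rcases lt_trichotomy i j with h | h | h
    · simp [h, not_lt_of_gt h, h.ne]
    · simp [h, lt_irrefl]
    · simp [h, not_lt_of_gt h, h.ne']
  have h1 : (∑ i ∈ s, f i) ^ 2 = ∑ i ∈ s, ∑ j ∈ s, f i * f j := by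
    rw [sq, Finset.sum_mul_sum]
  rw [h1, Finset.sum_congr rfl fun i hi => Finset.sum_congr rfl fun j hj => key i hi j hj]
  have h2 : ∑ i ∈ s, ∑ j ∈ s, (if j < i then f i * f j else 0) =
      ∑ i ∈ s, ∑ j ∈ s, (if i < j then f i * f j else 0) := by
    rw [Finset.sum_comm]
    exact Finset.sum_congr rfl fun i _ => Finset.sum_congr rfl fun j _ => by
      rcases lt_or_ge i j with h | h <;> simp [h, mul_comm]
  have h3 : ∑ i ∈ s, ∑ j ∈ s, (if i = j then f i * f j else 0) = ∑ i ∈ s, f i ^ 2 := by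
    refine Finset.sum_congr rfl fun i hi => ?_
    simp [Finset.sum_ite_eq, hi, sq]
  simp only [Finset.sum_add_distrib, h2, h3]
  ring

theorem stmt1 (n : ℕ) (hn : 2 ≤ n) (lam : Fin n → ℝ)
    (horder : ∀ i j : Fin n, i ≤ j → lam j ≤ lam i)
    (h1 : 0 < sigma1 lam) (h2 : 0 < sigma2 lam) :
    lam ⟨0, by omega⟩ * (∑ i ∈ Finset.univ.erase (⟨0, by omega⟩ : Fin n), lam i)
      ≥ (2 / (n : ℝ)) * sigma2 lam := by
  have hn0 : (0 : ℝ) < n := by positivity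
  set e : Fin n := ⟨0, by omega⟩ with he
  set t := Finset.univ.erase e with ht
  set a := lam e with ha
  set T := ∑ i ∈ t, lam i with hT
  have hem : e ∈ (Finset.univ : Finset (Fin n)) := Finset.mem_univ e
  have he0 : (e : ℕ) = 0 := rfl
  have hne : ∀ j : Fin n, j ∈ t → e < j := by
    intro j hj
    have h' := Finset.ne_of_mem_erase hj
    have h'' : j.val ≠ 0 := fun h => h' (Fin.ext (by rw [h, he0]))
    exact Fin.lt_def.mpr (by omega)
  have hnlt : ∀ i : Fin n, ¬ i < e := fun i h => by
    have := Fin.lt_def.mp h; omega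
  -- S = a + T
  have hS : sigma1 lam = a + T := by
    rw [sigma1, ← Finset.add_sum_erase _ lam hem]
  -- decomposition: sigma2 = a * T + sigma2'
  set s2' := ∑ i ∈ t, ∑ j ∈ t, if i < j then lam i * lam j else 0 with hs2'
  have hdec : sigma2 lam = a * T + s2' := by
    rw [sigma2, ← Finset.add_sum_erase _ _ hem]
    congr 1
    · rw [← Finset.add_sum_erase _ _ hem, if_neg (lt_irrefl e), zero_add, Finset.mul_sum]
      exact Finset.sum_congr rfl fun j hj => by rw [if_pos (hne j hj)]
    · refine Finset.sum_congr rfl fun i hi => ?_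
      rw [← Finset.add_sum_erase _ _ hem, if_neg (hnlt i), zero_add]
  set Q' := ∑ i ∈ t, lam i ^ 2 with hQ'
  have hTsq : T ^ 2 = 2 * s2' + Q' := pair_sum_sq t lam
  have hcardt : (t.card : ℝ) = (n : ℝ) - 1 := by
    rw [ht, Finset.card_erase_of_mem hem]
    simp [Fintype.card_fin]
    rw [Nat.cast_sub (by omega)]
    simp
  have hcauchy : T ^ 2 ≤ ((n : ℝ) - 1) * Q' := by
    rw [← hcardt]
    exact sq_sum_le_card_mul_sum_sq
  have hTa : T ≤ ((n : ℝ) - 1) * a := by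
    calc T ≤ ∑ _i ∈ t, a := Finset.sum_le_sum fun i hi =>
            horder e i (le_of_lt (hne i hi))
      _ = ((n : ℝ) - 1) * a := by rw [Finset.sum_const, nsmul_eq_mul, hcardt]
  have hQ'0 : 0 ≤ Q' := Finset.sum_nonneg fun i _ => sq_nonneg _
  have ha0 : 0 < a := by
    by_contra h
    push_neg at h
    have : sigma1 lam ≤ 0 := by
      rw [hS]
      nlinarith [hn0, (by exact_mod_cast hn : (2:ℝ) ≤ n)]
    linarith
  -- full identity to get T > 0
  have hfull : sigma1 lam ^ 2 = 2 * sigma2 lam + (a ^ 2 + Q') := by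
    rw [sigma1, sigma2, pair_sum_sq Finset.univ lam, ← Finset.add_sum_erase _ (fun i => lam i ^ 2) hem]
  have hT0 : 0 < T := by
    have hSa : sigma1 lam ^ 2 > a ^ 2 := by nlinarith
    nlinarith [hS, h1, ha0]
  have hn2 : (2 : ℝ) ≤ n := by exact_mod_cast hn
  rw [ge_iff_le, div_mul_eq_mul_div, div_le_iff₀ hn0]
  -- goal : 2 * sigma2 lam ≤ a * T * n
  rw [hdec]
  nlinarith [mul_le_mul_of_nonneg_right hTa (le_of_lt hT0), hcauchy, hTsq, hQ'0,
    mul_pos ha0 hT0, hn2]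
end

section
/- Let λ, μ ∈ Γ_2 ⊂ ℝ^n. Then Garding's inequality holds for σ_2: ∑_{i=1}^n (∂σ_2/∂λ_i)(λ) · μ_i ≥ 2 σ_2(λ)^{1/2} σ_2(μ)^{1/2}, where ∂σ_2/∂λ_i (λ) = ∑_{j ≠ i} λ_j. -/
open Finset

lemma two_sigma2 {n : ℕ} (v : Fin n → ℝ) :
    2 * sigma2 v = (sigma1 v) ^ 2 - ∑ i, (v i) ^ 2 := by
  have hsq : (sigma1 v) ^ 2 = ∑ i, ∑ j, v i * v j := by
    rw [sigma1, sq, Finset.sum_mul_sum]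
  have hsplit : ∀ i j : Fin n, v i * v j =
      (if i < j then v i * v j else 0) + (if i = j then v i * v j else 0)
        + (if j < i then v i * v j else 0) := by
    intro i j
    rcases lt_trichotomy i j with h | h | h
    · simp [h, h.ne, h.ne', not_lt.mpr h.le]
    · simp [h, lt_irrefl]
    · simp [h, h.ne, h.ne', not_lt.mpr h.le]
  have hswap : (∑ i, ∑ j, if (j : Fin n) < i then v i * v j else 0) = sigma2 v := by
    rw [Finset.sum_comm, sigma2]
    congr 1; ext i; congr 1; ext j
    rw [mul_comm]
  have hdiag : (∑ i, ∑ j, if (i : Fin n) = j then v i * v j else 0) = ∑ i, (v i) ^ 2 := by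
    congr 1; ext i
    simp [sq]
  have main : (∑ i, ∑ j, v i * v j)
      = (∑ i, ∑ j, if (i : Fin n) < j then v i * v j else 0)
        + (∑ i, ∑ j, if (i : Fin n) = j then v i * v j else 0)
        + (∑ i, ∑ j, if (j : Fin n) < i then v i * v j else 0) := by
    rw [← Finset.sum_add_distrib, ← Finset.sum_add_distrib]
    congr 1; ext i
    rw [← Finset.sum_add_distrib, ← Finset.sum_add_distrib]
    congr 1; ext j
    exact hsplit i j
  rw [hsq, main, hswap, hdiag, sigma2]; ring

theorem stmt2 (n : ℕ) (hn : 2 ≤ n) (lam mu : Fin n → ℝ)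
    (hlam : 0 < sigma1 lam ∧ 0 < sigma2 lam)
    (hmu : 0 < sigma1 mu ∧ 0 < sigma2 mu) :
    ∑ i, (sigma1 lam - lam i) * mu i
      ≥ 2 * Real.sqrt (sigma2 lam) * Real.sqrt (sigma2 mu) := by
  obtain ⟨hl1, hl2⟩ := hlam
  obtain ⟨hm1, hm2⟩ := hmu
  set a := sigma1 lam with ha
  set c := sigma1 mu with hc
  set b := Real.sqrt (∑ i, (lam i) ^ 2) with hb
  set d := Real.sqrt (∑ i, (mu i) ^ 2) with hd
  have hb0 : 0 ≤ b := Real.sqrt_nonneg _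
  have hd0 : 0 ≤ d := Real.sqrt_nonneg _
  have hbsq : b ^ 2 = ∑ i, (lam i) ^ 2 := Real.sq_sqrt (by positivity)
  have hdsq : d ^ 2 = ∑ i, (mu i) ^ 2 := Real.sq_sqrt (by positivity)
  have hL : 2 * sigma2 lam = a ^ 2 - b ^ 2 := by rw [two_sigma2, hbsq]
  have hM : 2 * sigma2 mu = c ^ 2 - d ^ 2 := by rw [two_sigma2, hdsq]
  -- LHS rewrite
  have hlhs : ∑ i, (a - lam i) * mu i = a * c - ∑ i, lam i * mu i := by
    have hc' : ∑ i, mu i = c := by rw [hc, sigma1]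
    simp only [sub_mul]
    rw [Finset.sum_sub_distrib, ← Finset.mul_sum, hc']
  -- Cauchy-Schwarz
  have hcs : ∑ i, lam i * mu i ≤ b * d := by
    have h := Finset.sum_mul_sq_le_sq_mul_sq Finset.univ lam mu
    nlinarith [h, mul_nonneg hb0 hd0]
  have hba : b < a := by nlinarith
  have hdc : d < c := by nlinarith
  have hrhs : 2 * Real.sqrt (sigma2 lam) * Real.sqrt (sigma2 mu)
      = Real.sqrt (a ^ 2 - b ^ 2) * Real.sqrt (c ^ 2 - d ^ 2) := by
    rw [← hL, ← hM, Real.sqrt_mul (by norm_num) (sigma2 lam),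
      Real.sqrt_mul (by norm_num) (sigma2 mu)]
    have h2 : Real.sqrt 2 ^ 2 = 2 := Real.sq_sqrt (by norm_num)
    linear_combination (-(Real.sqrt (sigma2 lam) * Real.sqrt (sigma2 mu))) * h2
  have key : Real.sqrt (a ^ 2 - b ^ 2) * Real.sqrt (c ^ 2 - d ^ 2) ≤ a * c - b * d := by
    have h1 : 0 ≤ a * c - b * d := by nlinarith
    have hX : (0:ℝ) ≤ a ^ 2 - b ^ 2 := by nlinarith
    calc Real.sqrt (a ^ 2 - b ^ 2) * Real.sqrt (c ^ 2 - d ^ 2)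
        = Real.sqrt ((a ^ 2 - b ^ 2) * (c ^ 2 - d ^ 2)) := (Real.sqrt_mul hX _).symm
      _ ≤ Real.sqrt ((a * c - b * d) ^ 2) :=
          Real.sqrt_le_sqrt (by nlinarith [sq_nonneg (a * d - b * c)])
      _ = a * c - b * d := Real.sqrt_sq h1
  rw [hlhs, hrhs]
  linarith
end
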